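/- Let λ₁,…,λ_k ≥ 0 and t ≥ 0, and for n ∈ ℕ set p(n,t) = ∑_{x ∈ Ω(k,n)} ∏_{j=1}^{k} ((λ_j t)^{x_j}/x_j!)·e^{-λ_j t} with Ω(k,n) = {x ∈ ℕ^k : ∑_j j x_j = n}. Then for every n ≥ 1, n·p(n,t) = t·∑_{j=1}^{min(n,k)} j·λ_j·p(n-j,t). -/

import Mathlib

open scoped BigOperators

/-- State probabilities of the generalized counting process. -/
noncomputable def gcpPMF (k : ℕ) (lam : Fin k → ℝ) (t : ℝ) (n : ℕ) : ℝ :=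
  ∑' x : Fin k → ℕ,
    if (∑ j, (j.1 + 1) * x j) = n then
      ∏ j, (lam j * t) ^ (x j) / (Nat.factorial (x j) : ℝ) * Real.exp (-(lam j * t))
    else 0

/-- Recurrence relation for the state probabilities of the GCP:
`n·p(n,t) = t·∑_{j=1}^{min(n,k)} j·λ_j·p(n-j,t)` for `n ≥ 1`. -/
theorem gcp_pmf_recurrence (k : ℕ) (lam : Fin k → ℝ) (hlam : ∀ j, 0 ≤ lam j)
    (t : ℝ) (ht : 0 ≤ t) (n : ℕ) (hn : 1 ≤ n) :
    (n : ℝ) * gcpPMF k lam t n =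
      t * ∑ j ∈ Finset.univ.filter (fun j : Fin k => j.1 + 1 ≤ n),
        ((j.1 : ℝ) + 1) * lam j * gcpPMF k lam t (n - (j.1 + 1)) := by
  classical
  set S : Finset (Fin k → ℕ) := Fintype.piFinset (fun _ => Finset.range (n+1)) with hSdef
  set w : (Fin k → ℕ) → ℕ := fun x => ∑ i, (i.1 + 1) * x i with hwdef
  set g : (Fin k → ℕ) → ℝ := fun x =>
    ∏ i, (lam i * t) ^ (x i) / (Nat.factorial (x i) : ℝ) * Real.exp (-(lam i * t)) with hgdef
  -- the weighted single coordinate is at most the weight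
  have hsingle : ∀ (x : Fin k → ℕ) (i : Fin k), (i.1 + 1) * x i ≤ w x := by
    intro x i
    exact Finset.single_le_sum (f := fun i : Fin k => (i.1 + 1) * x i)
      (fun i _ => Nat.zero_le _) (Finset.mem_univ i)
  have hcoord : ∀ (x : Fin k → ℕ) (i : Fin k), x i ≤ w x := by
    intro x i
    exact le_trans (Nat.le_mul_of_pos_left _ (Nat.succ_pos _)) (hsingle x i)
  -- gcpPMF as a finite sum over S, for all levels m ≤ n
  have key : ∀ m : ℕ, m ≤ n → gcpPMF k lam t m =
      ∑ x ∈ S, if w x = m then g x else 0 := by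
    intro m hm
    unfold gcpPMF
    apply tsum_eq_sum
    intro x hx
    rw [if_neg]
    intro hw
    apply hx
    simp only [hSdef, Fintype.mem_piFinset, Finset.mem_range]
    intro i
    have h1 : x i ≤ w x := hcoord x i
    have h2 : w x = m := hw
    omega
  -- weight of an update
  have hupd : ∀ (x : Fin k → ℕ) (j : Fin k) (a : ℕ),
      w (Function.update x j a) + (j.1 + 1) * x j = w x + (j.1 + 1) * a := by
    intro x j a
    show (∑ i, (i.1 + 1) * (Function.update x j a i)) + (j.1 + 1) * x j
      = (∑ i, (i.1 + 1) * x i) + (j.1 + 1) * a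
    rw [← Finset.add_sum_erase _ _ (Finset.mem_univ j),
        ← Finset.add_sum_erase _ (fun i => (i.1 + 1) * x i) (Finset.mem_univ j)]
    have hsum : ∑ i ∈ Finset.univ.erase j, (i.1 + 1) * (Function.update x j a i)
        = ∑ i ∈ Finset.univ.erase j, (i.1 + 1) * x i :=
      Finset.sum_congr rfl (fun i hi => by
        rw [Function.update_of_ne (Finset.ne_of_mem_erase hi)])
    rw [hsum, Function.update_self]
    ring
  -- rewrite both sides via key
  rw [key n le_rfl]
  have hrhs : ∀ j ∈ Finset.univ.filter (fun j : Fin k => j.1 + 1 ≤ n),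
      ((j.1 : ℝ) + 1) * lam j * gcpPMF k lam t (n - (j.1 + 1)) =
      ((j.1 : ℝ) + 1) * lam j * ∑ y ∈ S, if w y = n - (j.1 + 1) then g y else 0 := by
    intro j hj
    rw [key _ (Nat.sub_le _ _)]
  rw [Finset.sum_congr rfl hrhs]
  -- LHS: push n inside, replace by weight, expand as double sum
  rw [Finset.mul_sum]
  have lhs1 : ∀ x ∈ S, (n : ℝ) * (if w x = n then g x else 0) =
      ∑ j : Fin k, (if w x = n then ((j.1 : ℝ) + 1) * (x j : ℝ) * g x else 0) := by
    intro x hx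
    split_ifs with h
    · rw [← Finset.sum_mul]
      congr 1
      rw [← h]
      show ((∑ i, (i.1 + 1) * x i : ℕ) : ℝ) = ∑ i : Fin k, ((i.1 : ℝ) + 1) * (x i : ℝ)
      push_cast
      rfl
    · simp
  rw [Finset.sum_congr rfl lhs1, Finset.sum_comm, Finset.sum_filter, Finset.mul_sum]
  apply Finset.sum_congr rfl
  intro j _
  by_cases hjn : j.1 + 1 ≤ n
  · rw [if_pos hjn]
    -- restrict to x j ≥ 1
    have step1 : ∀ x ∈ S, (if w x = n then ((j.1 : ℝ) + 1) * (x j : ℝ) * g x else 0) =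
        (if w x = n ∧ 1 ≤ x j then ((j.1 : ℝ) + 1) * (x j : ℝ) * g x else 0) := by
      intro x hx
      by_cases h1 : 1 ≤ x j
      · simp [h1]
      · have h0 : x j = 0 := by omega
        simp [h0]
    rw [Finset.sum_congr rfl step1, ← Finset.sum_filter]
    have step2 : t * (((j.1 : ℝ) + 1) * lam j * ∑ y ∈ S, (if w y = n - (j.1+1) then g y else 0))
        = ∑ y ∈ S.filter (fun y => w y = n - (j.1+1)), ((j.1 : ℝ) + 1) * lam j * t * g y := by
      rw [← Finset.sum_filter, Finset.mul_sum, Finset.mul_sum]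
      exact Finset.sum_congr rfl (fun y _ => by ring)
    rw [step2]
    apply Finset.sum_nbij' (fun x => Function.update x j (x j - 1))
      (fun y => Function.update y j (y j + 1))
    · -- maps forward
      intro x hx
      simp only [Finset.mem_filter, hSdef, Fintype.mem_piFinset, Finset.mem_range] at hx ⊢
      obtain ⟨hxS, hwx, hx1⟩ := hx
      have hu := hupd x j (x j - 1)
      have h2 : (j.1+1) * (x j - 1) + (j.1+1) = (j.1+1) * x j := by
        obtain ⟨c, hc⟩ : ∃ c, x j = c + 1 := ⟨x j - 1, by omega⟩
        rw [hc, Nat.add_sub_cancel]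
        ring
      have hb := hsingle x j
      constructor
      · intro i
        by_cases hij : i = j
        · subst hij; rw [Function.update_self]; have := hxS i; omega
        · rw [Function.update_of_ne hij]; exact hxS i
      · generalize hA : (j.1+1) * x j = A at hu h2 hb
        generalize hB : (j.1+1) * (x j - 1) = B at hu h2
        omega
    · -- maps backward
      intro y hy
      simp only [Finset.mem_filter, hSdef, Fintype.mem_piFinset, Finset.mem_range] at hy ⊢
      obtain ⟨hyS, hwy⟩ := hy
      have hu := hupd y j (y j + 1)
      have h2 : (j.1+1) * (y j + 1) = (j.1+1) * y j + (j.1+1) := by ring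
      have hb := hsingle y j
      have h1 : y j ≤ (j.1+1) * y j := Nat.le_mul_of_pos_left _ (Nat.succ_pos _)
      have hyj : y j + 1 ≤ n := by
        generalize hA : (j.1+1) * y j = A at hb h1
        omega
      refine ⟨?_, ?_, ?_⟩
      · intro i
        by_cases hij : i = j
        · subst hij; rw [Function.update_self]; omega
        · rw [Function.update_of_ne hij]; exact hyS i
      · generalize hA : (j.1+1) * y j = A at hu h2 hb
        generalize hB : (j.1+1) * (y j + 1) = B at hu h2
        omega
      · rw [Function.update_self]; omega
    · -- left inverse
      intro x hx
      simp only [Finset.mem_filter] at hx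
      funext i
      by_cases hij : i = j
      · subst hij
        simp only [Function.update_self]
        omega
      · simp [Function.update_of_ne hij]
    · -- right inverse
      intro y hy
      funext i
      by_cases hij : i = j
      · subst hij
        simp only [Function.update_self]
        omega
      · simp [Function.update_of_ne hij]
    · -- values agree
      intro x hx
      simp only [Finset.mem_filter] at hx
      obtain ⟨hxS, hwx, hx1⟩ := hx
      simp only [hgdef]
      rw [← Finset.mul_prod_erase _ _ (Finset.mem_univ j),
          ← Finset.mul_prod_erase _
            (fun i => (lam i * t) ^ (Function.update x j (x j - 1) i) /
              (Nat.factorial (Function.update x j (x j - 1) i) : ℝ) *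
              Real.exp (-(lam i * t))) (Finset.mem_univ j)]
      have hprod : ∏ i ∈ Finset.univ.erase j,
          (lam i * t) ^ (Function.update x j (x j - 1) i) /
            (Nat.factorial (Function.update x j (x j - 1) i) : ℝ) * Real.exp (-(lam i * t))
          = ∏ i ∈ Finset.univ.erase j,
          (lam i * t) ^ (x i) / (Nat.factorial (x i) : ℝ) * Real.exp (-(lam i * t)) :=
        Finset.prod_congr rfl (fun i hi => by
          rw [Function.update_of_ne (Finset.ne_of_mem_erase hi)])
      rw [hprod, Function.update_self]
      obtain ⟨c, hc⟩ : ∃ c, x j = c + 1 := ⟨x j - 1, by omega⟩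
      rw [hc]
      simp only [Nat.add_sub_cancel, pow_succ, Nat.factorial_succ]
      have hfac : (Nat.factorial c : ℝ) ≠ 0 := Nat.cast_ne_zero.mpr (Nat.factorial_ne_zero c)
      have hc1 : ((c : ℝ) + 1) ≠ 0 := by positivity
      push_cast
      field_simp
  · -- j+1 > n : all terms vanish
    rw [if_neg hjn, mul_zero]
    apply Finset.sum_eq_zero
    intro x hx
    split_ifs with h
    · have hb := hsingle x j
      have hwx : w x = n := h
      have h0 : x j = 0 := by
        by_contra h1
        have h3 : j.1 + 1 ≤ (j.1 + 1) * x j := Nat.le_mul_of_pos_right _ (by omega)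
        generalize hA : (j.1+1) * x j = A at hb h3
        omega
      simp [h0]
    · rfl
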